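/- arXiv:1105.3346 — 3 statements merged into one kernel-verified Lean document; each statement's English description precedes it below -/
import Mathlib

section
/- The sum over t from m to min(km,n) of C(n,t) · Q(k,m,t) equals (C(n,m))^k, where Q(k,m,t) = Σ_{i=0}^{t-m} (-1)^i C(t,i) (C(t-i,m))^k. -/
open Finset

/-- The full alternating sum. -/
private def Fsum (k m t : ℕ) : ℤ :=
  ∑ i ∈ Finset.range (t + 1), (-1 : ℤ) ^ i * (t.choose i) * ((t - i).choose m) ^ k

/-- Inclusion–exclusion: `Fsum k m t` counts `k`-tuples of `m`-subsets of `Fin t`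
covering all of `Fin t`. -/
private lemma Fsum_eq_card (k m t : ℕ) :
    Fsum k m t =
      (((Fintype.piFinset fun _ : Fin k => Finset.powersetCard m (Finset.univ : Finset (Fin t)))
          |>.filter fun f => Finset.univ.biUnion f = Finset.univ).card : ℤ) := by
  classical
  set P := Fintype.piFinset fun _ : Fin k =>
    Finset.powersetCard m (Finset.univ : Finset (Fin t)) with hP
  have step1 : ((P.filter fun f => Finset.univ.biUnion f = Finset.univ).card : ℤ)
      = ∑ f ∈ P, if Finset.univ.biUnion f = Finset.univ then (1 : ℤ) else 0 := by
    rw [Finset.card_filter]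
    push_cast
    simp
  have step2 : ∀ f ∈ P, (if Finset.univ.biUnion f = Finset.univ then (1 : ℤ) else 0)
      = ∑ S ∈ (Finset.univ : Finset (Fin t)).powerset,
          if S ⊆ (Finset.univ.biUnion f)ᶜ then (-1 : ℤ) ^ S.card else 0 := by
    intro f _
    have h1 : ∑ S ∈ ((Finset.univ.biUnion f)ᶜ : Finset (Fin t)).powerset, (-1 : ℤ) ^ S.card
        = if ((Finset.univ.biUnion f)ᶜ : Finset (Fin t)) = ∅ then 1 else 0 :=
      Finset.sum_powerset_neg_one_pow_card
    have h2 : ((Finset.univ.biUnion f)ᶜ : Finset (Fin t)).powerset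
        = (Finset.univ : Finset (Fin t)).powerset.filter
            (fun S => S ⊆ (Finset.univ.biUnion f)ᶜ) := by
      ext S
      simp [Finset.mem_powerset]
    have h3 : (((Finset.univ.biUnion f)ᶜ : Finset (Fin t)) = ∅)
        ↔ (Finset.univ.biUnion f = Finset.univ) := by
      constructor
      · intro h
        have := congrArg (·ᶜ) h
        simpa using this
      · intro h
        simp [h]
    rw [← Finset.sum_filter, ← h2, h1, if_congr h3 rfl rfl]
  have step3 : ∀ S : Finset (Fin t),
      (∑ f ∈ P, if S ⊆ (Finset.univ.biUnion f)ᶜ then (-1 : ℤ) ^ S.card else 0)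
      = (-1 : ℤ) ^ S.card * ((t - S.card).choose m : ℤ) ^ k := by
    intro S
    have hfilter : P.filter (fun f => S ⊆ (Finset.univ.biUnion f)ᶜ)
        = Fintype.piFinset fun _ : Fin k => Finset.powersetCard m Sᶜ := by
      ext f
      simp only [Finset.mem_filter, hP, Fintype.mem_piFinset, Finset.mem_powersetCard]
      constructor
      · rintro ⟨hf, hsub⟩ i
        refine ⟨?_, (hf i).2⟩
        intro x hx
        rw [Finset.mem_compl]
        intro hxS
        have hb : x ∈ (Finset.univ.biUnion f)ᶜ := hsub hxS
        rw [Finset.mem_compl] at hb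
        exact hb (Finset.mem_biUnion.2 ⟨i, Finset.mem_univ i, hx⟩)
      · intro h
        refine ⟨fun i => ⟨Finset.subset_univ _, (h i).2⟩, ?_⟩
        intro x hxS
        rw [Finset.mem_compl]
        intro hx
        obtain ⟨i, -, hxi⟩ := Finset.mem_biUnion.1 hx
        exact Finset.mem_compl.1 ((h i).1 hxi) hxS
    have hcard : (P.filter (fun f => S ⊆ (Finset.univ.biUnion f)ᶜ)).card
        = ((t - S.card).choose m) ^ k := by
      rw [hfilter, Fintype.card_piFinset]
      simp [Finset.card_powersetCard, Finset.card_compl]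
    rw [← Finset.sum_filter, Finset.sum_const, hcard, nsmul_eq_mul]
    push_cast
    ring
  rw [step1, Finset.sum_congr rfl step2, Finset.sum_comm,
    Finset.sum_congr rfl fun S _ => step3 S]
  rw [Finset.sum_powerset_apply_card
    (fun j => (-1 : ℤ) ^ j * ((t - j).choose m : ℤ) ^ k)
    (x := (Finset.univ : Finset (Fin t)))]
  simp only [Finset.card_univ, Fintype.card_fin, nsmul_eq_mul]
  unfold Fsum
  refine Finset.sum_congr rfl fun i _ => by push_cast; ring

/-- A covering tuple of `m`-sets forces `t ≤ k * m`, so `Fsum` vanishes beyond that. -/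
private lemma Fsum_eq_zero_of_lt (k m t : ℕ) (h : k * m < t) : Fsum k m t = 0 := by
  classical
  rw [Fsum_eq_card]
  norm_cast
  rw [Finset.card_eq_zero, Finset.filter_eq_empty_iff]
  rintro f hf hcover
  have hle : (Finset.univ.biUnion f).card ≤ ∑ j : Fin k, (f j).card :=
    Finset.card_biUnion_le
  rw [Fintype.mem_piFinset] at hf
  have hc : ∀ j, (f j).card = m := fun j => (Finset.mem_powersetCard.1 (hf j)).2
  rw [hcover, Finset.card_univ, Fintype.card_fin] at hle
  simp only [hc, Finset.sum_const, Finset.card_univ, Fintype.card_fin, smul_eq_mul] at hle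
  omega

/-- `Fsum` vanishes cheaply for `t < m` (provided `k ≥ 1`). -/
private lemma Fsum_eq_zero_of_lt' (k m t : ℕ) (hk : 1 ≤ k) (h : t < m) : Fsum k m t = 0 := by
  unfold Fsum
  refine Finset.sum_eq_zero fun i _ => ?_
  rw [show ((t - i).choose m) = 0 from Nat.choose_eq_zero_of_lt (by omega)]
  push_cast
  rw [zero_pow (show k ≠ 0 by omega), mul_zero]

/-- Algebraic binomial inversion. -/
private lemma inv_lemma (n m k : ℕ) (hm : m ≤ n) :
    (∑ t ∈ Finset.range (n + 1), (n.choose t : ℤ) * Fsum k m t)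
      = ((n.choose m : ℤ)) ^ k := by
  have reflect : ∀ t, Fsum k m t
      = ∑ s ∈ Finset.range (t + 1),
          (-1 : ℤ) ^ (t - s) * (t.choose s) * ((s).choose m) ^ k := by
    intro t
    unfold Fsum
    rw [← Finset.sum_range_reflect]
    refine Finset.sum_congr rfl fun s hs => ?_
    rw [Finset.mem_range, Nat.lt_succ_iff] at hs
    rw [show t + 1 - 1 - s = t - s from by omega, Nat.choose_symm hs,
      show t - (t - s) = s from by omega]
  simp only [reflect, Finset.mul_sum]
  rw [Finset.sum_comm' (t' := Finset.range (n + 1)) (s' := fun s => Finset.Icc s n)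
    (fun t s => by simp only [Finset.mem_range, Finset.mem_Icc]; omega)]
  have inner : ∀ s ∈ Finset.range (n + 1),
      (∑ t ∈ Finset.Icc s n, (n.choose t : ℤ) *
        ((-1 : ℤ) ^ (t - s) * (t.choose s) * ((s).choose m) ^ k))
      = (if s = n then ((n.choose m : ℤ)) ^ k else 0) := by
    intro s hs
    rw [Finset.mem_range, Nat.lt_succ_iff] at hs
    have key : ∀ t ∈ Finset.Icc s n, (n.choose t : ℤ) *
        ((-1 : ℤ) ^ (t - s) * (t.choose s) * ((s).choose m) ^ k)
        = (n.choose s : ℤ) * ((s).choose m) ^ k *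
            ((-1 : ℤ) ^ (t - s) * ((n - s).choose (t - s) : ℤ)) := by
      intro t ht
      rw [Finset.mem_Icc] at ht
      have := Nat.choose_mul (n := n) (k := t) (s := s) ht.1
      have hcast : (n.choose t : ℤ) * (t.choose s : ℤ)
          = (n.choose s : ℤ) * ((n - s).choose (t - s) : ℤ) := by exact_mod_cast this
      linear_combination ((-1 : ℤ) ^ (t - s) * ((s).choose m : ℤ) ^ k) * hcast
    rw [Finset.sum_congr rfl key, ← Finset.mul_sum]
    rw [show Finset.Icc s n = Finset.Ico s (n + 1) from by rw [Finset.Ico_add_one_right_eq_Icc],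
      Finset.sum_Ico_eq_sum_range]
    simp only [show ∀ j, s + j - s = j from fun j => by omega]
    rw [show n + 1 - s = (n - s) + 1 from by omega, Int.alternating_sum_range_choose]
    by_cases hsn : s = n
    · subst hsn
      simp [Nat.choose_self]
    · rw [if_neg (by omega), if_neg hsn, mul_zero]
  rw [Finset.sum_congr rfl inner, Finset.sum_ite_eq' (Finset.range (n + 1)) n
    (fun _ => ((n.choose m : ℤ)) ^ k), if_pos (Finset.mem_range.2 (Nat.lt_succ_self n))]

/-- Σ_{t=m}^{min(km,n)} C(n,t) · Q(k,m,t) = (C(n,m))^k. -/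
theorem stmt3 (n k m : ℕ) (hn : 1 ≤ n) (hk : 1 ≤ k) (hm : 1 ≤ m) (hmn : m ≤ n) :
    (∑ t ∈ Finset.Icc m (min (k * m) n),
        (n.choose t : ℤ) *
          ∑ i ∈ Finset.range (t - m + 1),
            (-1 : ℤ) ^ i * (t.choose i) * ((t - i).choose m) ^ k) =
      ((n.choose m : ℤ)) ^ k := by
  have step1 : ∀ t ∈ Finset.Icc m (min (k * m) n),
      (n.choose t : ℤ) *
          (∑ i ∈ Finset.range (t - m + 1),
            (-1 : ℤ) ^ i * (t.choose i) * ((t - i).choose m) ^ k)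
        = (n.choose t : ℤ) * Fsum k m t := by
    intro t ht
    rw [Finset.mem_Icc] at ht
    congr 1
    unfold Fsum
    refine Finset.sum_subset (Finset.range_subset_range.2 (by omega)) fun i hi hni => ?_
    rw [Finset.mem_range] at hi hni
    have hmin : t ≤ k * m ⊓ n := ht.2
    rw [show ((t - i).choose m) = 0 from Nat.choose_eq_zero_of_lt (by omega)]
    push_cast
    rw [zero_pow (show k ≠ 0 by omega), mul_zero]
  rw [Finset.sum_congr rfl step1]
  rw [Finset.sum_subset (show Finset.Icc m (min (k * m) n) ⊆ Finset.range (n + 1) from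
    fun t ht => by rw [Finset.mem_Icc] at ht; rw [Finset.mem_range]; omega)
    (fun t ht hnt => ?_)]
  · exact inv_lemma n m k hmn
  · rw [Finset.mem_range, Nat.lt_succ_iff] at ht
    rw [Finset.mem_Icc, not_and_or] at hnt
    rcases hnt with h | h
    · rw [Fsum_eq_zero_of_lt' k m t hk (by omega), mul_zero]
    · rw [Fsum_eq_zero_of_lt k m t (by omega), mul_zero]
end

section
/- For m ≤ t and k ≥ 1, Q(k,m,t) = Σ_{i=0}^{t-m} (-1)^i C(t,i) (C(t-i,m))^k is nonnegative, and Q(k,m,t) > 0 if and only if t ≤ km. -/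
open Finset

private def QP (k m t : ℕ) : Finset (Fin k → Finset (Fin t)) :=
  (Fintype.piFinset fun _ : Fin k => (univ : Finset (Fin t)).powersetCard m).filter
    (fun f => ∀ x : Fin t, ∃ j, x ∈ f j)

private lemma Qcount (k m t : ℕ) :
    (∑ i ∈ Finset.range (t + 1), (-1 : ℤ) ^ i * (t.choose i) * ((t - i).choose m) ^ k)
    = (QP k m t).card := by
  classical
  set P := Fintype.piFinset fun _ : Fin k => (univ : Finset (Fin t)).powersetCard m with hP
  have h1 : ∀ i : ℕ, (-1 : ℤ) ^ i * (t.choose i) * ((t - i).choose m) ^ k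
      = ∑ I ∈ (univ : Finset (Fin t)).powersetCard i,
          (-1 : ℤ) ^ I.card * ((t - I.card).choose m) ^ k := by
    intro i
    have hc : ∀ I ∈ (univ : Finset (Fin t)).powersetCard i,
        (-1 : ℤ) ^ I.card * ((t - I.card).choose m) ^ k
        = (-1 : ℤ) ^ i * ((t - i).choose m) ^ k := by
      intro I hI
      simp only [mem_powersetCard] at hI
      rw [hI.2]
    rw [Finset.sum_congr rfl hc, Finset.sum_const, card_powersetCard,
      card_univ, Fintype.card_fin, nsmul_eq_mul]
    ring
  have h2 : (∑ i ∈ Finset.range (t + 1), (-1 : ℤ) ^ i * (t.choose i) * ((t - i).choose m) ^ k)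
      = ∑ I ∈ (univ : Finset (Fin t)).powerset,
          (-1 : ℤ) ^ I.card * ((t - I.card).choose m) ^ k := by
    rw [Finset.powerset_card_biUnion,
      Finset.sum_biUnion ((Finset.pairwise_disjoint_powersetCard _).set_pairwise _),
      card_univ, Fintype.card_fin]
    exact Finset.sum_congr rfl fun i _ => h1 i
  have h3 : ∀ I ∈ (univ : Finset (Fin t)).powerset,
      (((t - I.card).choose m : ℤ)) ^ k
      = ∑ f ∈ P, (if ∀ j, Disjoint (f j) I then (1 : ℤ) else 0) := by
    intro I _
    rw [← Finset.sum_filter, Finset.sum_const, nsmul_eq_mul, mul_one]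
    have hfil : P.filter (fun f => ∀ j, Disjoint (f j) I)
        = Fintype.piFinset fun _ : Fin k => (univ \ I : Finset (Fin t)).powersetCard m := by
      ext f
      simp only [Finset.mem_filter, hP, Fintype.mem_piFinset, mem_powersetCard,
        Finset.subset_sdiff, Finset.subset_univ, true_and]
      constructor
      · rintro ⟨ha, hb⟩ a
        exact ⟨hb a, ha a⟩
      · intro h
        exact ⟨fun a => (h a).2, fun a => (h a).1⟩
    rw [hfil, Fintype.card_piFinset, Finset.prod_const,
      card_powersetCard, Finset.card_sdiff_of_subset (Finset.subset_univ I),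
      card_univ, Fintype.card_fin, card_univ, Fintype.card_fin]
    push_cast
    ring
  rw [h2, Finset.sum_congr rfl (fun I hI => by rw [mul_comm, h3 I hI, Finset.sum_mul]),
    Finset.sum_comm]
  have h4 : ∀ f ∈ P,
      (∑ I ∈ (univ : Finset (Fin t)).powerset,
        (if ∀ j, Disjoint (f j) I then (1 : ℤ) else 0) * (-1 : ℤ) ^ I.card)
      = (if ∀ x : Fin t, ∃ j, x ∈ f j then (1 : ℤ) else 0) := by
    intro f _
    have hrw : ∀ I : Finset (Fin t),
        (if ∀ j, Disjoint (f j) I then (1 : ℤ) else 0) * (-1 : ℤ) ^ I.card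
        = if ∀ j, Disjoint (f j) I then (-1 : ℤ) ^ I.card else 0 := by
      intro I; split <;> simp
    rw [Finset.sum_congr rfl fun I _ => hrw I, ← Finset.sum_filter]
    have hfil : (univ : Finset (Fin t)).powerset.filter (fun I => ∀ j, Disjoint (f j) I)
        = ((univ.biUnion f)ᶜ : Finset (Fin t)).powerset := by
      ext I
      simp only [Finset.mem_filter, Finset.mem_powerset, Finset.subset_univ, true_and,
        Finset.subset_iff, Finset.mem_compl, Finset.mem_biUnion, Finset.mem_univ,
        true_and, not_exists, Finset.disjoint_right]
      tauto
    rw [hfil, Finset.sum_powerset_neg_one_pow_card]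
    congr 1
    simp only [eq_iff_iff]
    rw [Finset.compl_eq_empty_iff, Finset.eq_univ_iff_forall]
    simp [Finset.mem_biUnion]
  rw [Finset.sum_congr rfl h4, ← Finset.sum_filter]
  rw [Finset.sum_const, nsmul_eq_mul, mul_one, QP]

private lemma Qnonempty (k m t : ℕ) (hmt : m ≤ t) :
    (QP k m t).Nonempty ↔ t ≤ k * m := by
  classical
  constructor
  · rintro ⟨f, hf⟩
    simp only [QP, Finset.mem_filter, Fintype.mem_piFinset, mem_powersetCard] at hf
    have hcov : (univ : Finset (Fin k)).biUnion f = univ := by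
      rw [Finset.eq_univ_iff_forall]
      intro x
      obtain ⟨j, hj⟩ := hf.2 x
      exact Finset.mem_biUnion.2 ⟨j, Finset.mem_univ j, hj⟩
    calc t = ((univ : Finset (Fin k)).biUnion f).card := by
            rw [hcov, card_univ, Fintype.card_fin]
      _ ≤ ∑ j : Fin k, (f j).card := Finset.card_biUnion_le
      _ = k * m := by
            rw [Finset.sum_congr rfl fun j _ => (hf.1 j).2, Finset.sum_const,
              card_univ, Fintype.card_fin, smul_eq_mul]
  · intro htkm
    refine ⟨fun j => (Finset.range m).attach.image
      (fun l => (⟨min (j.1 * m) (t - m) + l.1, by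
        have h1 := Finset.mem_range.1 l.2
        have h2 := min_le_right (j.1 * m) (t - m)
        omega⟩ : Fin t)), ?_⟩
    simp only [QP, Finset.mem_filter, Fintype.mem_piFinset, mem_powersetCard]
    refine ⟨fun j => ⟨Finset.subset_univ _, ?_⟩, ?_⟩
    · rw [Finset.card_image_of_injective _ ?_, Finset.card_attach, Finset.card_range]
      intro a b hab
      have h := congrArg Fin.val hab
      simp only at h
      exact Subtype.ext (by omega)
    · intro x
      have hm : 0 < m := by
        rcases Nat.eq_zero_or_pos m with h | h
        · subst h
          simp only [Nat.mul_zero, Nat.le_zero] at htkm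
          exact absurd x.isLt (by omega)
        · exact h
      set j0 := x.1 / m with hj0
      have hjk : j0 < k := (Nat.div_lt_iff_lt_mul hm).2 (lt_of_lt_of_le x.isLt htkm)
      have hA : j0 * m ≤ x.1 := Nat.div_mul_le_self _ _
      have hB : x.1 < j0 * m + m := by
        have h := Nat.div_add_mod x.1 m
        have h' := Nat.mod_lt x.1 hm
        rw [← hj0] at h
        nlinarith [h, h']
      obtain ⟨s, hs1, hs2, hsm⟩ : ∃ s, s ≤ x.1 ∧ x.1 < s + m ∧ s = min (j0 * m) (t - m) := by
        refine ⟨min (j0 * m) (t - m), le_trans (min_le_left _ _) hA, ?_, rfl⟩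
        rcases le_total (j0 * m) (t - m) with h | h
        · rw [min_eq_left h]; exact hB
        · rw [min_eq_right h]
          have := x.isLt
          omega
      refine ⟨⟨j0, hjk⟩, Finset.mem_image.2
        ⟨⟨x.1 - s, Finset.mem_range.2 (by omega)⟩, Finset.mem_attach _ _, ?_⟩⟩
      apply Fin.ext
      show min (j0 * m) (t - m) + (x.1 - s) = x.1
      rw [← hsm]
      omega

/-- For m ≤ t and k ≥ 1, Q(k,m,t) is nonnegative, and Q(k,m,t) > 0 iff t ≤ km. -/
theorem stmt15 (k m t : ℕ) (hk : 1 ≤ k) (hmt : m ≤ t) :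
    0 ≤ (∑ i ∈ Finset.range (t - m + 1),
          (-1 : ℤ) ^ i * (t.choose i) * ((t - i).choose m) ^ k) ∧
    (0 < (∑ i ∈ Finset.range (t - m + 1),
          (-1 : ℤ) ^ i * (t.choose i) * ((t - i).choose m) ^ k) ↔ t ≤ k * m) := by
  have hext : (∑ i ∈ Finset.range (t - m + 1),
        (-1 : ℤ) ^ i * (t.choose i) * ((t - i).choose m) ^ k)
      = (∑ i ∈ Finset.range (t + 1),
        (-1 : ℤ) ^ i * (t.choose i) * ((t - i).choose m) ^ k) := by
    apply Finset.sum_subset (Finset.range_subset_range.2 (by omega))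
    intro i hi hni
    simp only [Finset.mem_range] at hi hni
    have hz : (t - i).choose m = 0 := Nat.choose_eq_zero_of_lt (by omega)
    rw [hz]
    simp [zero_pow (by omega : k ≠ 0)]
  rw [hext, Qcount k m t]
  refine ⟨Int.natCast_nonneg _, ?_⟩
  rw [← Qnonempty k m t hmt, ← Finset.card_pos]
  exact_mod_cast Iff.rfl
end

section
/- Σ_{t=m}^{min(km,n)} t · C(n,t) · Q(k,m,t) / (C(n,m))^k = n·(1 - ((n-m)/n)^k), where Q(k,m,t) = Σ_{i=0}^{t-m} (-1)^i C(t,i)(C(t-i,m))^k. -/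
open Finset Polynomial

private lemma altA (N : ℕ) : ∑ j ∈ range (N+1), (-1:ℚ)^j * (N.choose j) = if N = 0 then 1 else 0 := by
  have h := @Int.alternating_sum_range_choose N
  have h2 : ((∑ i ∈ range (N+1), (-1:ℤ)^i * (N.choose i) : ℤ) : ℚ)
      = ((if N = 0 then 1 else 0 : ℤ) : ℚ) := by rw [h]
  push_cast at h2
  convert h2 using 2

private lemma altB (N : ℕ) : ∑ j ∈ range (N+1), (-1:ℚ)^j * j * (N.choose j) = if N = 1 then -1 else 0 := by
  cases N with
  | zero => simp
  | succ N' =>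
    rw [Finset.sum_range_succ']
    push_cast
    have step : ∀ j ∈ range (N'+1),
        (-1:ℚ)^(j+1) * (j+1) * ((N'+1).choose (j+1))
          = (-(N'+1)) * ((-1:ℚ)^j * (N'.choose j)) := by
      intro j _
      have h := Nat.add_one_mul_choose_eq N' j
      have h2 : ((N'+1) * N'.choose j : ℚ) = ((N'+1).choose (j+1)) * (j+1) := by
        exact_mod_cast congrArg (Nat.cast : ℕ → ℚ) h
      rw [pow_succ]
      linear_combination ((-1:ℚ)^j) * h2
    rw [Finset.sum_congr rfl step, ← Finset.mul_sum, altA N']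
    rcases Nat.eq_zero_or_pos N' with h | h
    · subst h; norm_num
    · rw [if_neg (by omega), if_neg (by omega)]; simp

private lemma cast_choose_prod (s m : ℕ) :
    (s.choose m : ℚ) = (∏ j ∈ range m, ((s:ℚ) - j)) / (m.factorial : ℚ) := by
  rcases lt_or_ge s m with h | h
  · rw [Nat.choose_eq_zero_of_lt h,
      Finset.prod_eq_zero (Finset.mem_range.2 h) (by simp)]
    simp
  · have h1 : ((s.descFactorial m : ℕ) : ℚ) = ∏ j ∈ range m, ((s:ℚ) - j) := by
      rw [Nat.descFactorial_eq_prod_range, Nat.cast_prod]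
      refine Finset.prod_congr rfl fun j hj => ?_
      have : j ≤ s := le_trans (Nat.le_of_lt_succ (Nat.lt_succ_of_lt (mem_range.1 hj))) h
      push_cast [Nat.cast_sub this]
      ring
    have h2 := Nat.descFactorial_eq_factorial_mul_choose s m
    have h3 : ((s.descFactorial m : ℕ) : ℚ) = (m.factorial : ℚ) * s.choose m := by
      exact_mod_cast congrArg (Nat.cast : ℕ → ℚ) h2
    rw [← h1, h3]
    have hf : (m.factorial : ℚ) ≠ 0 := by exact_mod_cast m.factorial_ne_zero
    field_simp

private lemma alt_poly_sum : ∀ (t : ℕ) (P : ℚ[X]), P.degree < (t : ℕ) →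
    ∑ s ∈ range (t+1), (-1:ℚ)^s * (t.choose s) * P.eval (s:ℚ) = 0 := by
  intro t
  induction t with
  | zero =>
    intro P hP
    have : P = 0 := by
      rw [← Polynomial.degree_eq_bot]
      exact Nat.WithBot.lt_zero_iff.1 (by exact_mod_cast hP)
    simp [this]
  | succ t ih =>
    intro P hP
    by_cases hP0 : P = 0
    · simp [hP0]
    set Q : ℚ[X] := P - P.comp (X + 1) with hQdef
    have hXC : ((X + 1 : ℚ[X])).natDegree = 1 := by
      simpa using Polynomial.natDegree_X_add_C (1:ℚ)
    have hlc : (P.comp (X + 1)).leadingCoeff = P.leadingCoeff := by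
      rw [Polynomial.leadingCoeff_comp (by rw [hXC]; norm_num)]
      have : (X + 1 : ℚ[X]).leadingCoeff = 1 := by
        simpa using (Polynomial.monic_X_add_C (1:ℚ)).leadingCoeff
      rw [this, one_pow, mul_one]
    have hcomp0 : P.comp (X + 1) ≠ 0 := by
      intro hc
      apply hP0
      rw [← Polynomial.leadingCoeff_eq_zero, ← hlc, hc, Polynomial.leadingCoeff_zero]
    have hdeq : P.degree = (P.comp (X + 1)).degree := by
      rw [Polynomial.degree_eq_natDegree hP0, Polynomial.degree_eq_natDegree hcomp0,
        Polynomial.natDegree_comp, hXC, mul_one]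
    have hdQ : Q.degree < (t : ℕ) := by
      have h1 : Q.degree < P.degree := Polynomial.degree_sub_lt hdeq hP0 hlc.symm
      have h2 : P.degree ≤ (t : ℕ) := by
        rw [Polynomial.degree_eq_natDegree hP0] at hP ⊢
        exact_mod_cast Nat.lt_succ_iff.1 (by exact_mod_cast hP)
      exact lt_of_lt_of_le h1 h2
    have key := ih Q hdQ
    have e1 : ∑ s ∈ range (t+2), (-1:ℚ)^s * ((t+1).choose s) * P.eval (s:ℚ)
        = P.eval (0:ℚ) + ∑ s ∈ range (t+1),
            ((-1:ℚ)^(s+1) * (t.choose s) * P.eval ((s:ℚ)+1)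
              + (-1:ℚ)^(s+1) * (t.choose (s+1)) * P.eval ((s:ℚ)+1)) := by
      rw [Finset.sum_range_succ']
      have hterm : ∀ s ∈ range (t+1),
          (-1:ℚ)^(s+1) * (((t+1).choose (s+1) : ℕ) : ℚ) * P.eval (((s+1 : ℕ)):ℚ)
            = (-1:ℚ)^(s+1) * (t.choose s) * P.eval ((s:ℚ)+1)
              + (-1:ℚ)^(s+1) * (t.choose (s+1)) * P.eval ((s:ℚ)+1) := by
        intro s _
        rw [Nat.choose_succ_succ]
        push_cast
        ring
      rw [Finset.sum_congr rfl hterm]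
      simp [add_comm]
    have e2 : ∑ s ∈ range (t+1), (-1:ℚ)^(s+1) * (t.choose (s+1)) * P.eval ((s:ℚ)+1)
        = (∑ s ∈ range (t+1), (-1:ℚ)^s * (t.choose s) * P.eval (s:ℚ)) - P.eval (0:ℚ) := by
      have := Finset.sum_range_succ' (fun s => ((-1:ℚ)^s * ((t.choose s : ℕ) : ℚ) * P.eval (s:ℚ) : ℚ)) (t+1)
      have h0 : ∑ s ∈ range (t+2), (-1:ℚ)^s * (t.choose s) * P.eval (s:ℚ)
          = ∑ s ∈ range (t+1), (-1:ℚ)^s * (t.choose s) * P.eval (s:ℚ) := by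
        rw [Finset.sum_range_succ, Nat.choose_eq_zero_of_lt (by omega)]
        simp
      rw [h0] at this
      push_cast at this ⊢
      simp only [pow_zero, Nat.choose_zero_right, Nat.cast_one, one_mul, Nat.cast_zero] at this
      linarith [this]
    have e3 : ∀ s : ℕ, Q.eval (s:ℚ) = P.eval (s:ℚ) - P.eval ((s:ℚ)+1) := by
      intro s
      simp [hQdef, Polynomial.eval_comp]
    calc ∑ s ∈ range (t+1+1), (-1:ℚ)^s * ((t+1).choose s) * P.eval (s:ℚ)
        = P.eval (0:ℚ) + (∑ s ∈ range (t+1),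
            (-1:ℚ)^(s+1) * (t.choose s) * P.eval ((s:ℚ)+1))
          + ((∑ s ∈ range (t+1), (-1:ℚ)^s * (t.choose s) * P.eval (s:ℚ)) - P.eval (0:ℚ)) := by
          rw [e1, ← e2]; rw [Finset.sum_add_distrib]; ring
      _ = ∑ s ∈ range (t+1), (-1:ℚ)^s * (t.choose s) * Q.eval (s:ℚ) := by
          have e4 : ∑ s ∈ range (t+1), (-1:ℚ)^s * (t.choose s) * Q.eval (s:ℚ)
              = (∑ s ∈ range (t+1), (-1:ℚ)^s * (t.choose s) * P.eval (s:ℚ))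
                - ∑ s ∈ range (t+1), (-1:ℚ)^s * (t.choose s) * P.eval ((s:ℚ)+1) := by
            rw [← Finset.sum_sub_distrib]
            refine Finset.sum_congr rfl fun s hs => ?_
            rw [e3 s]; ring
          have e5 : ∑ s ∈ range (t+1), (-1:ℚ)^(s+1) * (t.choose s) * P.eval ((s:ℚ)+1)
              = - ∑ s ∈ range (t+1), (-1:ℚ)^s * (t.choose s) * P.eval ((s:ℚ)+1) := by
            rw [← Finset.sum_neg_distrib]
            refine Finset.sum_congr rfl fun s hs => ?_
            ring
          rw [e4, e5]; ring
      _ = 0 := key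

private lemma qvanish (k m t : ℕ) (ht : k * m < t) :
    ∑ s ∈ range (t+1), (-1:ℚ)^s * (t.choose s) * ((s.choose m : ℚ))^k = 0 := by
  set P : ℚ[X] := (Polynomial.C ((m.factorial : ℚ))⁻¹ * ∏ j ∈ range m, (X - Polynomial.C (j:ℚ)))^k with hP
  have heval : ∀ s : ℕ, P.eval (s:ℚ) = ((s.choose m : ℚ))^k := by
    intro s
    rw [hP]
    simp only [Polynomial.eval_pow, Polynomial.eval_mul, Polynomial.eval_C,
      Polynomial.eval_prod, Polynomial.eval_sub, Polynomial.eval_X]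
    rw [cast_choose_prod s m]
    rw [div_eq_inv_mul]
  have hfne : (m.factorial : ℚ) ≠ 0 := by exact_mod_cast Nat.factorial_ne_zero m
  have h1 : (∏ j ∈ range m, (X - Polynomial.C (j:ℚ))).degree = ((m:ℕ) : WithBot ℕ) := by
    rw [Polynomial.degree_prod]
    simp only [Polynomial.degree_X_sub_C]
    simp
  have h2 : (Polynomial.C ((m.factorial : ℚ))⁻¹ * ∏ j ∈ range m, (X - Polynomial.C (j:ℚ))).degree
      = ((m:ℕ) : WithBot ℕ) := by
    rw [Polynomial.degree_C_mul (inv_ne_zero hfne), h1]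
  have hdeg : P.degree < (t : ℕ) := by
    rw [hP, Polynomial.degree_pow, h2]
    have : k • ((m:ℕ) : WithBot ℕ) = (((k*m : ℕ)) : WithBot ℕ) := by
      simp only [nsmul_eq_mul]
      exact_mod_cast rfl
    rw [this]
    exact_mod_cast ht
  have hz := alt_poly_sum t P hdeg
  calc ∑ s ∈ range (t+1), (-1:ℚ)^s * (t.choose s) * ((s.choose m : ℚ))^k
      = ∑ s ∈ range (t+1), (-1:ℚ)^s * (t.choose s) * P.eval (s:ℚ) := by
        refine Finset.sum_congr rfl fun s _ => ?_; rw [heval]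
    _ = 0 := hz

private lemma Gval (n s : ℕ) (hs : s ≤ n) :
    ∑ t ∈ Icc s n, (-1:ℚ)^(t-s) * t * (n.choose t) * (t.choose s)
      = (if s = n then (n:ℚ) else 0) - (if s + 1 = n then (n:ℚ) else 0) := by
  have h1 : Icc s n = Ico s (n+1) := (Finset.Ico_add_one_right_eq_Icc s n).symm
  rw [h1, Finset.sum_Ico_eq_sum_range]
  have hrange : n + 1 - s = (n - s) + 1 := by omega
  rw [hrange]
  set N := n - s with hN
  have hterm : ∀ j ∈ range (N+1),
      (-1:ℚ)^((s+j)-s) * ((s+j : ℕ) : ℚ) * (n.choose (s+j)) * ((s+j).choose s)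
        = (n.choose s : ℚ) * ((s:ℚ) * ((-1)^j * (N.choose j)) + (-1)^j * j * (N.choose j)) := by
    intro j hj
    have hj' : j ≤ N := Nat.lt_succ_iff.1 (mem_range.1 hj)
    have hsum : s + j ≤ n := by omega
    have hmul := Nat.choose_mul (n := n) (Nat.le_add_right s j)
    have hsub : s + j - s = j := by omega
    rw [hsub] at hmul ⊢
    have hmulQ : ((n.choose (s+j)) : ℚ) * ((s+j).choose s) = (n.choose s : ℚ) * ((n-s).choose j) := by
      exact_mod_cast congrArg (Nat.cast : ℕ → ℚ) hmul
    push_cast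
    linear_combination ((-1:ℚ)^j*((s:ℚ)+j)) * hmulQ
  rw [Finset.sum_congr rfl hterm, ← Finset.mul_sum]
  rw [Finset.sum_add_distrib, ← Finset.mul_sum, altA N, altB N]
  rcases Nat.lt_or_ge s n with h | h
  · have hN0 : N ≠ 0 := by omega
    rw [if_neg hN0, if_neg (by omega : ¬ s = n)]
    rcases eq_or_ne (s+1) n with h2 | h2
    · rw [if_pos (by omega : N = 1), if_pos h2]
      have : n.choose s = n := by
        have : s = n - 1 := by omega
        subst this
        rw [← Nat.choose_symm (by omega : n - 1 ≤ n)]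
        simp [Nat.choose_one_right, show n - (n-1) = 1 by omega]
      rw [this]
      ring
    · rw [if_neg (by omega : ¬ N = 1), if_neg h2]
      ring
  · have hsn : s = n := le_antisymm hs h
    rw [if_pos (by omega : N = 0), if_neg (by omega : ¬ N = 1), if_pos hsn,
      if_neg (by omega : ¬ s + 1 = n)]
    subst hsn
    simp

private lemma neg_one_pow_sub' (t s : ℕ) (h : s ≤ t) : (-1:ℚ)^(t-s) = (-1)^t * (-1)^s := by
  have h1 : (-1:ℚ)^(t-s) * (-1)^s = (-1)^t := by
    rw [← pow_add]; congr 1; omega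
  have h2 : (-1:ℚ)^(s+s) = 1 := Even.neg_one_pow ⟨s, rfl⟩
  calc (-1:ℚ)^(t-s) = (-1:ℚ)^(t-s) * ((-1:ℚ)^(s+s)) := by rw [h2, mul_one]
    _ = ((-1:ℚ)^(t-s) * (-1)^s) * (-1)^s := by rw [pow_add]; ring
    _ = (-1)^t * (-1)^s := by rw [h1]

private lemma Qform (k m t : ℕ) (hm : m ≤ t) (hk : 1 ≤ k) :
    ∑ i ∈ range (t - m + 1), (-1:ℚ)^i * (t.choose i) * (((t-i).choose m : ℚ))^k
      = ∑ s ∈ Icc m t, (-1:ℚ)^(t-s) * (t.choose s) * ((s.choose m : ℚ))^k := by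
  have hzero : ∀ i ∈ range (t+1), i ∉ range (t - m + 1) →
      (-1:ℚ)^i * (t.choose i) * (((t-i).choose m : ℚ))^k = 0 := by
    intro i hi hni
    have hlt : t - i < m := by
      simp only [mem_range] at hi hni; omega
    rw [Nat.choose_eq_zero_of_lt hlt]
    simp [zero_pow (by omega : k ≠ 0)]
  rw [Finset.sum_subset (Finset.range_subset_range.2 (show t-m+1 ≤ t+1 by omega)) hzero]
  have hrefl := Finset.sum_range_reflect
    (fun i => ((-1:ℚ)^i * (t.choose i) * (((t-i).choose m : ℚ))^k)) (t+1)
  rw [← hrefl]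
  have hzero2 : ∀ s ∈ range (t+1), s ∉ Icc m t →
      (-1:ℚ)^(t-s) * (t.choose s) * ((s.choose m : ℚ))^k = 0 := by
    intro s hs hns
    have hlt : s < m := by
      simp only [mem_range] at hs; simp only [mem_Icc] at hns; omega
    rw [Nat.choose_eq_zero_of_lt hlt]
    simp [zero_pow (by omega : k ≠ 0)]
  rw [Finset.sum_subset (fun s hs => mem_range.2 (by simp only [mem_Icc] at hs; omega)) hzero2]
  refine Finset.sum_congr rfl fun s hs => ?_
  have hst : s ≤ t := Nat.lt_succ_iff.1 (mem_range.1 hs)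
  have e1 : t + 1 - 1 - s = t - s := by omega
  have e2 : t - (t - s) = s := by omega
  rw [e1, Nat.choose_symm hst, e2]

/-- Σ_{t=m}^{min(km,n)} t·C(n,t)·Q(k,m,t)/(C(n,m))^k = n·(1 - ((n-m)/n)^k). -/
theorem stmt17 (n k m : ℕ) (hn : 1 ≤ n) (hm : 1 ≤ m) (hmn : m ≤ n) (hk : 1 ≤ k) :
    (∑ t ∈ Finset.Icc m (min (k * m) n),
        (t : ℚ) * (n.choose t : ℚ) *
          (∑ i ∈ Finset.range (t - m + 1),
            (-1 : ℚ) ^ i * (t.choose i) * ((t - i).choose m) ^ k) /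
          (n.choose m : ℚ) ^ k) =
      (n : ℚ) * (1 - (((n - m : ℕ) : ℚ) / (n : ℚ)) ^ k) := by
  have hn0 : (n:ℚ) ≠ 0 := Nat.cast_ne_zero.2 (by omega)
  have hCpos : 0 < n.choose m := Nat.choose_pos hmn
  have hC0 : ((n.choose m : ℕ):ℚ) ≠ 0 := Nat.cast_ne_zero.2 (by omega)
  rw [← Finset.sum_div, div_eq_iff (pow_ne_zero k hC0)]
  -- Step 1: rewrite inner sums
  have step1 : ∀ t ∈ Icc m (min (k*m) n),
      (t:ℚ) * (n.choose t) * (∑ i ∈ range (t-m+1), (-1:ℚ)^i * (t.choose i) * (((t-i).choose m:ℚ))^k)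
        = ∑ s ∈ Icc m t, (t:ℚ) * (n.choose t) * ((-1:ℚ)^(t-s) * (t.choose s) * ((s.choose m:ℚ))^k) := by
    intro t ht
    rw [Qform k m t (by simp only [mem_Icc] at ht; omega) hk, Finset.mul_sum]
  rw [Finset.sum_congr rfl step1]
  -- Step 2: extend outer range
  have step2 : ∑ t ∈ Icc m (min (k*m) n), (∑ s ∈ Icc m t,
        (t:ℚ) * (n.choose t) * ((-1:ℚ)^(t-s) * (t.choose s) * ((s.choose m:ℚ))^k))
      = ∑ t ∈ Icc m n, (∑ s ∈ Icc m t,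
        (t:ℚ) * (n.choose t) * ((-1:ℚ)^(t-s) * (t.choose s) * ((s.choose m:ℚ))^k)) := by
    refine Finset.sum_subset (Finset.Icc_subset_Icc_right (min_le_right _ _)) ?_
    intro t ht hnt
    simp only [mem_Icc] at ht hnt
    have htkm : k*m < t := by omega
    have hR : ∑ s ∈ Icc m t, (-1:ℚ)^(t-s) * (t.choose s) * ((s.choose m:ℚ))^k = 0 := by
      have hzero2 : ∀ s ∈ range (t+1), s ∉ Icc m t →
          (-1:ℚ)^(t-s) * (t.choose s) * ((s.choose m : ℚ))^k = 0 := by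
        intro s hs hns
        have hlt : s < m := by
          simp only [mem_range] at hs; simp only [mem_Icc] at hns; omega
        rw [Nat.choose_eq_zero_of_lt hlt]
        simp [zero_pow (by omega : k ≠ 0)]
      rw [Finset.sum_subset (fun s hs => mem_range.2 (by simp only [mem_Icc] at hs; omega)) hzero2]
      have hcongr : ∀ s ∈ range (t+1),
          (-1:ℚ)^(t-s) * (t.choose s) * ((s.choose m : ℚ))^k
            = (-1:ℚ)^t * ((-1:ℚ)^s * (t.choose s) * ((s.choose m : ℚ))^k) := by
        intro s hs
        rw [neg_one_pow_sub' t s (Nat.lt_succ_iff.1 (mem_range.1 hs))]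
        ring
      rw [Finset.sum_congr rfl hcongr, ← Finset.mul_sum, qvanish k m t htkm, mul_zero]
    calc ∑ s ∈ Icc m t, (t:ℚ) * (n.choose t) * ((-1:ℚ)^(t-s) * (t.choose s) * ((s.choose m:ℚ))^k)
        = (t:ℚ) * (n.choose t) * ∑ s ∈ Icc m t, (-1:ℚ)^(t-s) * (t.choose s) * ((s.choose m:ℚ))^k := by
          rw [Finset.mul_sum]
      _ = 0 := by rw [hR, mul_zero]
  rw [step2]
  -- Step 3: swap sums
  have hswap : (∑ t ∈ Icc m n, ∑ s ∈ Icc m t,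
        (t:ℚ) * (n.choose t) * ((-1:ℚ)^(t-s) * (t.choose s) * ((s.choose m:ℚ))^k))
      = ∑ s ∈ Icc m n, ∑ t ∈ Icc s n,
        (t:ℚ) * (n.choose t) * ((-1:ℚ)^(t-s) * (t.choose s) * ((s.choose m:ℚ))^k) := by
    apply Finset.sum_comm'
    intro t s
    simp only [mem_Icc]
    omega
  rw [hswap]
  -- Step 4: evaluate inner sums via Gval
  have step4 : ∀ s ∈ Icc m n, (∑ t ∈ Icc s n,
        (t:ℚ) * (n.choose t) * ((-1:ℚ)^(t-s) * (t.choose s) * ((s.choose m:ℚ))^k))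
      = ((s.choose m:ℚ))^k * ((if s = n then (n:ℚ) else 0) - (if s+1 = n then (n:ℚ) else 0)) := by
    intro s hs
    rw [← Gval n s (by simp only [mem_Icc] at hs; omega), Finset.mul_sum]
    refine Finset.sum_congr rfl fun t ht => ?_
    ring
  rw [Finset.sum_congr rfl step4]
  -- Step 5: evaluate the two single-term sums
  have split : ∑ s ∈ Icc m n, ((s.choose m:ℚ))^k * ((if s = n then (n:ℚ) else 0) - (if s+1 = n then (n:ℚ) else 0))
      = (∑ s ∈ Icc m n, (if s = n then ((s.choose m:ℚ))^k * n else 0))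
        - ∑ s ∈ Icc m n, (if s = n - 1 then ((s.choose m:ℚ))^k * n else 0) := by
    rw [← Finset.sum_sub_distrib]
    refine Finset.sum_congr rfl fun s hs => ?_
    have : (s+1 = n) = (s = n-1) := by
      apply propext; constructor <;> (intro hh; omega)
    have hsn : 1 ≤ n := hn
    rcases eq_or_ne s n with h2 | h2
    · have h1' : ¬ (s + 1 = n) := by omega
      have h5 : ¬ (n = n - 1) := by omega
      subst h2
      simp [h1', h5]
    · rcases eq_or_ne (s+1) n with h3 | h3
      · have h4 : s = n - 1 := by omega
        have h5 : ¬ (n - 1 = n) := by omega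
        have h6 : n - 1 + 1 = n := by omega
        subst h4
        simp [h5, h6]
      · have h4 : s ≠ n - 1 := by omega
        simp [h2, h3, h4]
  rw [split]
  have hsum1 : ∑ s ∈ Icc m n, (if s = n then ((s.choose m:ℚ))^k * n else 0)
      = ((n.choose m:ℚ))^k * n := by
    rw [Finset.sum_ite_eq' (Icc m n) n (fun s => ((s.choose m:ℚ))^k * (n:ℚ))]
    rw [if_pos (mem_Icc.2 ⟨hmn, le_refl n⟩)]
  have hsum2 : ∑ s ∈ Icc m n, (if s = n - 1 then ((s.choose m:ℚ))^k * n else 0)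
      = (((n-1).choose m:ℚ))^k * n := by
    rw [Finset.sum_ite_eq' (Icc m n) (n-1) (fun s => ((s.choose m:ℚ))^k * (n:ℚ))]
    by_cases hcase : n - 1 ∈ Icc m n
    · rw [if_pos hcase]
    · rw [if_neg hcase]
      have hmeq : n - 1 < m := by
        simp only [mem_Icc] at hcase; omega
      rw [Nat.choose_eq_zero_of_lt hmeq]
      simp [zero_pow (by omega : k ≠ 0)]
  rw [hsum1, hsum2]
  -- Step 6: identify with RHS
  have hnat : (n - m) * n.choose m = n * (n-1).choose m := by
    have h1 := Nat.choose_succ_right_eq n m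
    have h2 := Nat.add_one_mul_choose_eq (n-1) m
    have h3 : n - 1 + 1 = n := by omega
    rw [h3] at h2
    calc (n-m) * n.choose m = n.choose (m+1) * (m+1) := by rw [h1]; ring
      _ = n * (n-1).choose m := h2.symm
  have hkeyQ : ((n:ℚ) - m) * (n.choose m) = (n:ℚ) * ((n-1).choose m) := by
    have hq := congrArg (Nat.cast : ℕ → ℚ) hnat
    push_cast [Nat.cast_sub hmn] at hq
    exact hq
  rw [Nat.cast_sub hmn]
  have hrC : (((n:ℚ) - m)/n)^k * ((n.choose m:ℚ))^k = ((((n-1).choose m : ℕ)):ℚ)^k := by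
    rw [← mul_pow]
    congr 1
    field_simp
    linear_combination hkeyQ
  rw [show ((n:ℚ) * (1 - (((n:ℚ) - m)/n)^k)) * ((n.choose m:ℚ))^k
      = (n:ℚ) * ((n.choose m:ℚ))^k - (n:ℚ) * ((((n:ℚ) - m)/n)^k * ((n.choose m:ℚ))^k) by ring]
  rw [hrC]
  ring
end
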